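/- Let X_m be a real N×m matrix, σ > 0 with ‖X_m w‖ ≥ σ‖w‖ for all w ∈ ℝ^m, and X_mᵀX_m invertible. Let u ∈ ℝ^N, write X_m† = (X_mᵀX_m)⁻¹X_mᵀ, set d = ‖u‖² − uᵀ X_m X_m† u, assume d > 0, set c = 1/d, and let X = [X_m, u]. Let Ẑ be the (m+1)×N matrix whose first m rows are X_m† and whose last row is zero. Then ‖(XᵀX)⁻¹Xᵀ − Ẑ‖₂ ≤ c·‖u‖·√(1 + ‖u‖²/σ²). -/

import Mathlib

open scoped Matrix Matrix.Norms.L2Operator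

/-- Append a column `u` to an `N × m` matrix, yielding an `N × (m+1)` matrix. -/
def appendCol {N m : ℕ} (X : Matrix (Fin N) (Fin m) ℝ) (u : Fin N → ℝ) :
    Matrix (Fin N) (Fin (m + 1)) ℝ :=
  Matrix.of fun i => Fin.snoc (X i) (u i)

/-- Append a row `z` to an `m × N` matrix, yielding an `(m+1) × N` matrix. -/
def appendRow {N m : ℕ} (Z : Matrix (Fin m) (Fin N) ℝ) (z : Fin N → ℝ) :
    Matrix (Fin (m + 1)) (Fin N) ℝ :=
  Matrix.of (Fin.snoc Z z)

namespace PseudoAux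

open Matrix

@[simp] lemma snoc_row_last {N m : ℕ} (Z : Matrix (Fin m) (Fin N) ℝ) (z : Fin N → ℝ) :
    @Fin.snoc m (fun _ => Fin N → ℝ) Z z (Fin.last m) = z := Fin.snoc_last _ _

@[simp] lemma snoc_row_castSucc {N m : ℕ} (Z : Matrix (Fin m) (Fin N) ℝ) (z : Fin N → ℝ)
    (i : Fin m) : @Fin.snoc m (fun _ => Fin N → ℝ) Z z i.castSucc = Z i := Fin.snoc_castSucc _ _ _

lemma appendRow_mul {N m k : ℕ} (Z : Matrix (Fin m) (Fin N) ℝ) (z : Fin N → ℝ)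
    (W : Matrix (Fin N) (Fin k) ℝ) :
    appendRow Z z * W = appendRow (Z * W) (z ᵥ* W) := by
  ext a b
  induction a using Fin.lastCases with
  | last => simp [appendRow, Matrix.mul_apply, Matrix.vecMul, dotProduct]
  | cast a => simp [appendRow, Matrix.mul_apply]

lemma mul_appendCol {N m k : ℕ} (W : Matrix (Fin k) (Fin N) ℝ)
    (X : Matrix (Fin N) (Fin m) ℝ) (u : Fin N → ℝ) :
    W * appendCol X u = appendCol (W * X) (W *ᵥ u) := by
  ext a b
  induction b using Fin.lastCases with
  | last => simp [appendCol, Matrix.mul_apply, Matrix.mulVec, dotProduct]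
  | cast b => simp [appendCol, Matrix.mul_apply]

lemma vecMul_appendCol {N m : ℕ} (w : Fin N → ℝ) (X : Matrix (Fin N) (Fin m) ℝ)
    (u : Fin N → ℝ) :
    w ᵥ* appendCol X u = Fin.snoc (w ᵥ* X) (w ⬝ᵥ u) := by
  ext b
  induction b using Fin.lastCases with
  | last => simp [appendCol, Matrix.vecMul, dotProduct]
  | cast b => simp [appendCol, Matrix.vecMul, dotProduct]

lemma appendCol_mulVec {N m : ℕ} (X : Matrix (Fin N) (Fin m) ℝ) (u : Fin N → ℝ)
    (y : Fin m → ℝ) (a : ℝ) :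
    appendCol X u *ᵥ Fin.snoc y a = X *ᵥ y + a • u := by
  ext i
  simp [appendCol, Matrix.mulVec, dotProduct, Fin.sum_univ_castSucc, mul_comm]

lemma appendCol_mul_appendRow {N m : ℕ} (X : Matrix (Fin N) (Fin m) ℝ) (u : Fin N → ℝ)
    (Z : Matrix (Fin m) (Fin N) ℝ) (z : Fin N → ℝ) :
    appendCol X u * appendRow Z z = X * Z + vecMulVec u z := by
  ext i k
  simp [appendCol, appendRow, Matrix.mul_apply, vecMulVec_apply, Fin.sum_univ_castSucc]

lemma mul_vecMulVec {k N n : ℕ} (W : Matrix (Fin k) (Fin N) ℝ) (v : Fin N → ℝ)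
    (w : Fin n → ℝ) : W * vecMulVec v w = vecMulVec (W *ᵥ v) w := by
  ext i j
  simp only [Matrix.mul_apply, vecMulVec_apply, Matrix.mulVec, dotProduct,
    Finset.sum_mul]
  exact Finset.sum_congr rfl fun x _ => by ring

lemma vecMulVec_mul {k N n : ℕ} (v : Fin n → ℝ) (w : Fin N → ℝ)
    (W : Matrix (Fin N) (Fin k) ℝ) : vecMulVec v w * W = vecMulVec v (w ᵥ* W) := by
  ext i j
  simp only [Matrix.mul_apply, vecMulVec_apply, Matrix.vecMul, dotProduct,
    Finset.mul_sum]
  exact Finset.sum_congr rfl fun x _ => by ring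

lemma vecMulVec_mulVec {n N : ℕ} (v : Fin n → ℝ) (w : Fin N → ℝ) (x : Fin N → ℝ) :
    vecMulVec v w *ᵥ x = (w ⬝ᵥ x) • v := by
  ext i
  simp only [Matrix.mulVec, dotProduct, vecMulVec_apply, Pi.smul_apply,
    smul_eq_mul, Finset.mul_sum]
  rw [Finset.sum_mul]
  exact Finset.sum_congr rfl fun x _ => by ring

end PseudoAux
set_option maxHeartbeats 1000000 in
open Matrix PseudoAux in
/-- Pseudoinverse perturbation estimate in the proof of Proposition 5.5
(operator norm perturbation under column deletion). -/
theorem pseudoinverse_perturbation {N m : ℕ} (Xm : Matrix (Fin N) (Fin m) ℝ)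
    (σ : ℝ) (hσ : 0 < σ)
    (hXmσ : ∀ w : EuclideanSpace ℝ (Fin m),
      σ * ‖w‖ ≤ ‖(EuclideanSpace.equiv (Fin N) ℝ).symm (Xm *ᵥ w)‖)
    (hinv : IsUnit (Xmᵀ * Xm).det)
    (u : EuclideanSpace ℝ (Fin N))
    (d : ℝ) (hd : d = ‖u‖ ^ 2 - u ⬝ᵥ ((Xm * ((Xmᵀ * Xm)⁻¹ * Xmᵀ)) *ᵥ u))
    (hd0 : 0 < d) (c : ℝ) (hc : c = 1 / d) :
    ‖((appendCol Xm u)ᵀ * appendCol Xm u)⁻¹ * (appendCol Xm u)ᵀ -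
        appendRow ((Xmᵀ * Xm)⁻¹ * Xmᵀ) 0‖ ≤
      c * ‖u‖ * Real.sqrt (1 + ‖u‖ ^ 2 / σ ^ 2) := by
  classical
  set A : Matrix (Fin m) (Fin m) ℝ := Xmᵀ * Xm with hA
  set G : Matrix (Fin N) (Fin (m + 1)) ℝ := appendCol Xm u with hG
  set p : Matrix (Fin m) (Fin N) ℝ := A⁻¹ * Xmᵀ with hp
  set Z : Matrix (Fin (m + 1)) (Fin N) ℝ := appendRow p 0 with hZ
  set uf : Fin N → ℝ := fun i => u i with huf
  set y : Fin m → ℝ := p *ᵥ uf with hy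
  set w : Fin N → ℝ := uf - Xm *ᵥ y with hw
  set v : Fin (m + 1) → ℝ := Fin.snoc (-y) 1 with hv
  have hAl : A⁻¹ * A = 1 := Matrix.nonsing_inv_mul _ hinv
  have hAr : A * A⁻¹ = 1 := Matrix.mul_nonsing_inv _ hinv
  have hAsymm : Aᵀ = A := by rw [hA, Matrix.transpose_mul, Matrix.transpose_transpose]
  have hAisymm : (A⁻¹)ᵀ = A⁻¹ := by rw [Matrix.transpose_nonsing_inv, hAsymm]
  have hcd : c * d = 1 := by rw [hc]; field_simp
  have hc0 : 0 < c := by rw [hc]; positivity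
  have hGuf : G = appendCol Xm uf := rfl
  have hd' : d = ‖u‖ ^ 2 - uf ⬝ᵥ ((Xm * p) *ᵥ uf) := hd
  -- X_mᵀ w = 0
  have hXtw : Xmᵀ *ᵥ w = 0 := by
    have h1 : Xmᵀ *ᵥ (Xm *ᵥ y) = Xmᵀ *ᵥ uf := by
      rw [hy, hp, Matrix.mulVec_mulVec, Matrix.mulVec_mulVec, ← Matrix.mul_assoc, ← hA,
        hAr, Matrix.one_mul]
    rw [hw, Matrix.mulVec_sub, h1, sub_self]
  have hwXm : w ᵥ* Xm = 0 := by rw [← Matrix.mulVec_transpose, hXtw]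
  -- norms as dot products
  have hnorm_sq : ∀ (k : ℕ) (x : EuclideanSpace ℝ (Fin k)), ‖x‖ ^ 2 = x ⬝ᵥ x := by
    intro k x
    rw [EuclideanSpace.norm_eq, Real.sq_sqrt (by positivity)]
    simp [dotProduct, Real.norm_eq_abs, sq_abs, pow_two]
  have hwu : w ⬝ᵥ uf = d := by
    have h2 : (Xm * p) *ᵥ uf = Xm *ᵥ y := by rw [hy, Matrix.mulVec_mulVec]
    rw [hw, sub_dotProduct, hd', hnorm_sq N u, h2, dotProduct_comm (Xm *ᵥ y) uf]
  -- the rank one correction and candidate pseudoinverse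
  set V : Matrix (Fin (m + 1)) (Fin N) ℝ := vecMulVec v w with hV
  set M : Matrix (Fin (m + 1)) (Fin N) ℝ := Z + c • V with hM
  have hpXm : p * Xm = 1 := by rw [hp, Matrix.mul_assoc, ← hA, hAl]
  have hwG : w ᵥ* G = Fin.snoc (0 : Fin m → ℝ) d := by
    rw [hGuf, vecMul_appendCol, hwXm, hwu]
  have hGv : G *ᵥ v = w := by
    rw [hGuf, hv, appendCol_mulVec, Matrix.mulVec_neg, one_smul, hw]
    abel
  have hZG : Z * G = appendRow (appendCol 1 y) 0 := by
    rw [hZ, hGuf, appendRow_mul, Matrix.zero_vecMul, mul_appendCol, hpXm, ← hy]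
  have hMG : M * G = 1 := by
    rw [hM, Matrix.add_mul, Matrix.smul_mul, hV, PseudoAux.vecMulVec_mul, hwG, hZG]
    ext a b
    induction a using Fin.lastCases with
    | last =>
      induction b using Fin.lastCases with
      | last =>
        simp [Matrix.one_apply, vecMulVec_apply, hv, appendRow, hcd]
      | cast b =>
        simp [Matrix.one_apply, vecMulVec_apply, hv, appendRow,
          (Fin.castSucc_lt_last b).ne']
    | cast a =>
      induction b using Fin.lastCases with
      | last =>
        simp only [Matrix.add_apply, Matrix.smul_apply, vecMulVec_apply, hv, appendRow,
          Matrix.of_apply, Fin.snoc_castSucc, Fin.snoc_last, snoc_row_castSucc, appendCol,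
          Matrix.one_apply, smul_eq_mul, Pi.neg_apply]
        rw [if_neg (Fin.castSucc_lt_last a).ne]
        linear_combination (-(y a)) * hcd
      | cast b =>
        simp [appendRow, appendCol, vecMulVec_apply, hv,
          Matrix.one_apply, Fin.castSucc_inj]
  -- G * M is symmetric
  have hGZ : G * Z = Xm * p := by
    rw [hGuf, hZ, appendCol_mul_appendRow]
    have h0 : vecMulVec uf (0 : Fin N → ℝ) = 0 := by
      ext i j; simp [vecMulVec_apply]
    rw [h0, add_zero]
  have hGM : G * M = Xm * p + c • vecMulVec w w := by
    rw [hM, Matrix.mul_add, Matrix.mul_smul, hV, PseudoAux.mul_vecMulVec, hGv, hGZ]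
  have hXmp_symm : (Xm * p)ᵀ = Xm * p := by
    rw [Matrix.transpose_mul, hp, Matrix.transpose_mul, hAisymm, Matrix.transpose_transpose,
      ← Matrix.mul_assoc]
  have hww_symm : (vecMulVec w w)ᵀ = vecMulVec w w := by
    ext i j; simp [vecMulVec_apply, Matrix.transpose_apply, mul_comm]
  have hGMsymm : (G * M)ᵀ = G * M := by
    rw [hGM, Matrix.transpose_add, Matrix.transpose_smul, hXmp_symm, hww_symm]
  have hMtGt : Mᵀ * Gᵀ = G * M := by rw [← Matrix.transpose_mul, hGMsymm]
  have hleft : (M * Mᵀ) * (Gᵀ * G) = 1 := by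
    calc (M * Mᵀ) * (Gᵀ * G) = M * (Mᵀ * Gᵀ) * G := by
          rw [Matrix.mul_assoc, Matrix.mul_assoc, Matrix.mul_assoc]
      _ = M * (G * M) * G := by rw [hMtGt]
      _ = (M * G) * (M * G) := by
          rw [Matrix.mul_assoc, Matrix.mul_assoc, Matrix.mul_assoc]
      _ = 1 := by rw [hMG, Matrix.one_mul]
  have hBinv : (Gᵀ * G)⁻¹ = M * Mᵀ := Matrix.inv_eq_left_inv hleft
  have hfinal : (Gᵀ * G)⁻¹ * Gᵀ = M := by
    rw [hBinv, Matrix.mul_assoc, hMtGt, ← Matrix.mul_assoc, hMG, Matrix.one_mul]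
  have hdiff : (Gᵀ * G)⁻¹ * Gᵀ - Z = c • V := by
    rw [hfinal, hM, add_sub_cancel_left]
  rw [hdiff]
  -- Euclidean vectors
  set vE : EuclideanSpace ℝ (Fin (m + 1)) := (WithLp.equiv 2 (Fin (m + 1) → ℝ)).symm v with hvE
  set wE : EuclideanSpace ℝ (Fin N) := (WithLp.equiv 2 (Fin N → ℝ)).symm w with hwE
  set yE : EuclideanSpace ℝ (Fin m) := (WithLp.equiv 2 (Fin m → ℝ)).symm y with hyE
  set XyE : EuclideanSpace ℝ (Fin N) := (WithLp.equiv 2 (Fin N → ℝ)).symm (Xm *ᵥ y) with hXyE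
  -- operator norm of the rank-one matrix
  have hVle : ‖V‖ ≤ ‖vE‖ * ‖wE‖ := by
    rw [Matrix.l2_opNorm_def]
    refine ContinuousLinearMap.opNorm_le_bound _ (by positivity) fun x => ?_
    have happ : (LinearEquiv.trans Matrix.toEuclideanLin LinearMap.toContinuousLinearMap V) x =
        (WithLp.equiv 2 (Fin (m + 1) → ℝ)).symm
          ((w ⬝ᵥ (WithLp.equiv 2 (Fin N → ℝ) x)) • v) := by
      simp only [LinearEquiv.trans_apply, LinearMap.coe_toContinuousLinearMap',
        Matrix.toEuclideanLin_apply, hV]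
      rw [PseudoAux.vecMulVec_mulVec]
      rfl
    rw [happ, WithLp.equiv_symm_apply, WithLp.toLp_smul, norm_smul, Real.norm_eq_abs]
    have hinner : (inner ℝ wE x : ℝ) = w ⬝ᵥ (WithLp.equiv 2 (Fin N → ℝ) x) := by
      rw [EuclideanSpace.inner_eq_star_dotProduct, dotProduct_comm]
      rfl
    have h2 : |w ⬝ᵥ (WithLp.equiv 2 (Fin N → ℝ) x)| ≤ ‖wE‖ * ‖x‖ := by
      rw [← hinner]; exact abs_real_inner_le_norm wE x
    calc |w ⬝ᵥ (WithLp.equiv 2 (Fin N → ℝ) x)| * ‖vE‖ ≤ (‖wE‖ * ‖x‖) * ‖vE‖ := by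
          exact mul_le_mul_of_nonneg_right h2 (norm_nonneg _)
      _ = ‖vE‖ * ‖wE‖ * ‖x‖ := by ring
  -- Pythagoras
  have hudecomp : uf = (Xm *ᵥ y) + w := by
    funext i; simp [hw]
  have horth : (Xm *ᵥ y) ⬝ᵥ w = 0 := by
    rw [dotProduct_comm, dotProduct_mulVec, hwXm, zero_dotProduct]
  have hu2 : ‖u‖ ^ 2 = ‖XyE‖ ^ 2 + ‖wE‖ ^ 2 := by
    have e1 : ‖u‖ ^ 2 = uf ⬝ᵥ uf := hnorm_sq N u
    have e2 : ‖XyE‖ ^ 2 = (Xm *ᵥ y) ⬝ᵥ (Xm *ᵥ y) := hnorm_sq N XyE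
    have e3 : ‖wE‖ ^ 2 = w ⬝ᵥ w := hnorm_sq N wE
    rw [e1, e2, e3, hudecomp, add_dotProduct, dotProduct_add,
      dotProduct_add, horth]
    rw [dotProduct_comm w (Xm *ᵥ y), horth]
    ring
  have hwE_le : ‖wE‖ ≤ ‖u‖ :=
    by nlinarith [norm_nonneg wE, norm_nonneg u, sq_nonneg (‖XyE‖)]
  have hXyE_le : ‖XyE‖ ≤ ‖u‖ :=
    by nlinarith [norm_nonneg XyE, norm_nonneg u, sq_nonneg (‖wE‖)]
  have hyE_le : ‖yE‖ ≤ ‖u‖ / σ := by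
    have h3 : σ * ‖yE‖ ≤ ‖XyE‖ := hXmσ yE
    rw [le_div_iff₀ hσ]
    calc ‖yE‖ * σ = σ * ‖yE‖ := by ring
      _ ≤ ‖XyE‖ := h3
      _ ≤ ‖u‖ := hXyE_le
  -- norm of v
  have hvE2 : ‖vE‖ ^ 2 = 1 + ‖yE‖ ^ 2 := by
    have e4 : ‖vE‖ ^ 2 = v ⬝ᵥ v := hnorm_sq (m + 1) vE
    have e5 : ‖yE‖ ^ 2 = y ⬝ᵥ y := hnorm_sq m yE
    rw [e4, e5]
    simp only [dotProduct, hv, Fin.sum_univ_castSucc, Fin.snoc_castSucc,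
      Fin.snoc_last, Pi.neg_apply, neg_mul_neg, mul_one]
    ring
  have hvE_le : ‖vE‖ ≤ Real.sqrt (1 + ‖u‖ ^ 2 / σ ^ 2) := by
    have h5 : ‖vE‖ ^ 2 ≤ 1 + ‖u‖ ^ 2 / σ ^ 2 := by
      rw [hvE2]
      have : ‖yE‖ ^ 2 ≤ (‖u‖ / σ) ^ 2 := by
        apply pow_le_pow_left₀ (norm_nonneg _) hyE_le
      rw [div_pow] at this
      linarith
    calc ‖vE‖ = Real.sqrt (‖vE‖ ^ 2) := (Real.sqrt_sq (norm_nonneg _)).symm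
      _ ≤ Real.sqrt (1 + ‖u‖ ^ 2 / σ ^ 2) := Real.sqrt_le_sqrt h5
  -- final bound
  have hnormsmul : ‖c • V‖ = c * ‖V‖ := by
    rw [norm_smul, Real.norm_eq_abs, abs_of_pos hc0]
  rw [hnormsmul]
  calc c * ‖V‖ ≤ c * (‖vE‖ * ‖wE‖) := by
        exact mul_le_mul_of_nonneg_left hVle hc0.le
    _ ≤ c * (Real.sqrt (1 + ‖u‖ ^ 2 / σ ^ 2) * ‖u‖) := by
        refine mul_le_mul_of_nonneg_left ?_ hc0.le
        exact mul_le_mul hvE_le hwE_le (norm_nonneg _) (Real.sqrt_nonneg _)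
    _ = c * ‖u‖ * Real.sqrt (1 + ‖u‖ ^ 2 / σ ^ 2) := by ring
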